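/- If A is a stable real n×n matrix and W is any real n×n matrix, then the Lyapunov equation AᵀQ + QA + W = 0 has a unique solution Q; if moreover W is symmetric positive semidefinite then Q is symmetric positive semidefinite. -/

import Mathlib

open Matrix Filter NormedSpace
open scoped Topology
attribute [local instance] Matrix.linftyOpNormedAddCommGroup Matrix.linftyOpNormedRing
  Matrix.linftyOpNormedAlgebra

/-- mulVec on the left, as a continuous linear map in the matrix. -/
noncomputable def mulVecCLM {n : ℕ} (v : Fin n → ℂ) :
    Matrix (Fin n) (Fin n) ℂ →L[ℂ] (Fin n → ℂ) :=
  LinearMap.toContinuousLinearMap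
    { toFun := fun M => M *ᵥ v
      map_add' := fun M N => Matrix.add_mulVec M N v
      map_smul' := fun c M => smul_mulVec c M v }

lemma exp_smul_mulVec_of_genEig {n : ℕ} (B : Matrix (Fin n) (Fin n) ℂ) (μ : ℂ)
    (v : Fin n → ℂ) (k : ℕ) (hv : ((B - μ • 1) ^ k) *ᵥ v = 0) (t : ℂ) :
    exp (t • B) *ᵥ v =
      Complex.exp (t * μ) • ∑ j ∈ Finset.range k,
        ((t ^ j / j.factorial) • ((B - μ • 1) ^ j *ᵥ v)) := by
  set N := B - μ • 1 with hN
  have hsplit : t • B = algebraMap ℂ _ (t * μ) + t • N := by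
    rw [Algebra.algebraMap_eq_smul_one, hN, smul_sub, ← smul_smul]
    abel
  have hcomm : Commute (algebraMap ℂ (Matrix (Fin n) (Fin n) ℂ) (t * μ)) (t • N) :=
    Algebra.commute_algebraMap_left _ _
  have hexp : exp (t • B) = Complex.exp (t * μ) • exp (t • N) := by
    rw [hsplit, show exp (algebraMap ℂ _ (t * μ) + t • N) = exp (algebraMap ℂ _ (t * μ)) * exp (t • N) from exp_add_of_commute hcomm, show exp (algebraMap ℂ (Matrix (Fin n) (Fin n) ℂ) (t * μ)) = algebraMap ℂ _ (exp (t * μ)) from (algebraMap_exp_comm (t * μ)).symm, Complex.exp_eq_exp_ℂ,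
      Algebra.algebraMap_eq_smul_one, smul_mul_assoc, one_mul]
  rw [hexp, smul_mulVec]
  congr 1
  have hsum : Summable fun j : ℕ => ((j.factorial : ℂ))⁻¹ • (t • N) ^ j :=
    expSeries_summable' (𝕂 := ℂ) (t • N)
  have := (mulVecCLM v).map_tsum hsum
  rw [exp_eq_tsum (𝕂 := ℂ)]
  have hCLM : ∀ M : Matrix (Fin n) (Fin n) ℂ, mulVecCLM v M = M *ᵥ v := fun _ => rfl
  calc (∑' j : ℕ, ((j.factorial : ℂ))⁻¹ • (t • N) ^ j) *ᵥ v
      = mulVecCLM v (∑' j : ℕ, ((j.factorial : ℂ))⁻¹ • (t • N) ^ j) := rfl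
    _ = ∑' j : ℕ, ((j.factorial : ℂ))⁻¹ • ((t • N) ^ j *ᵥ v) := by
        rw [this]
        exact tsum_congr fun j => by rw [_root_.map_smul, hCLM]
    _ = ∑ j ∈ Finset.range k, ((t ^ j / j.factorial) • (N ^ j *ᵥ v)) := by
        refine tsum_eq_sum ?_ |>.trans (Finset.sum_congr rfl fun j _ => ?_)
        · intro j hj
          have hjk : k ≤ j := by simpa using hj
          have : N ^ j *ᵥ v = 0 := by
            rw [← Nat.sub_add_cancel hjk, pow_add, ← Matrix.mulVec_mulVec, hv,
              Matrix.mulVec_zero]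
          rw [smul_pow, smul_mulVec, this, smul_zero, smul_zero]
        · rw [smul_pow, smul_mulVec, smul_smul, div_eq_inv_mul]
lemma coeff_tendsto_zero {μ : ℂ} (hμ : μ.re < 0) (j : ℕ) :
    Tendsto (fun k : ℕ => Complex.exp ((k : ℂ) * μ) * ((k : ℂ) ^ j / (j.factorial : ℂ)))
      atTop (𝓝 0) := by
  rw [tendsto_zero_iff_norm_tendsto_zero]
  have h1 : Tendsto (fun x : ℝ => x ^ (j : ℝ) * Real.exp (-(-μ.re) * x)) atTop (𝓝 0) :=
    tendsto_rpow_mul_exp_neg_mul_atTop_nhds_zero _ _ (by linarith)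
  have h2 := ((h1.comp tendsto_natCast_atTop_atTop).const_mul
    (((j.factorial : ℝ))⁻¹ : ℝ))
  rw [mul_zero] at h2
  refine h2.congr fun k => ?_
  have hk : (0:ℝ) ≤ (k : ℝ) := Nat.cast_nonneg k
  simp only [Function.comp_apply, Real.rpow_natCast]
  rw [norm_mul, Complex.norm_exp, norm_div, norm_pow]
  have : ((k:ℂ) * μ).re = (k:ℝ) * μ.re := by simp
  rw [this]
  simp [Complex.norm_natCast]
  ring_nf

lemma mulVec_exp_tendsto_zero {n : ℕ} (B : Matrix (Fin n) (Fin n) ℂ)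
    (hB : ∀ μ ∈ spectrum ℂ B, μ.re < 0) (v : Fin n → ℂ) :
    Tendsto (fun k : ℕ => exp ((k : ℂ) • B) *ᵥ v) atTop (𝓝 0) := by
  let S : Submodule ℂ (Fin n → ℂ) :=
    { carrier := {w | Tendsto (fun k : ℕ => exp ((k : ℂ) • B) *ᵥ w) atTop (𝓝 0)}
      add_mem' := fun hu hw => by
        simpa [Matrix.mulVec_add] using Filter.Tendsto.add hu hw
      zero_mem' := by simpa [Matrix.mulVec_zero] using tendsto_const_nhds
      smul_mem' := fun c u hu => by
        simpa [Matrix.mulVec_smul] using Filter.Tendsto.const_smul hu c }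
  have hS : S = ⊤ := by
    rw [← top_le_iff, ← Module.End.iSup_maxGenEigenspace_eq_top (Matrix.toLinAlgEquiv' B)]
    refine iSup_le fun μ => fun w hw => ?_
    rcases eq_or_ne w 0 with rfl | hw0
    · exact S.zero_mem
    · rw [Module.End.mem_maxGenEigenspace] at hw
      obtain ⟨k, hk⟩ := hw
      have hμmem : μ ∈ spectrum ℂ B := by
        rw [← AlgEquiv.spectrum_eq (Matrix.toLinAlgEquiv' (R := ℂ) (n := Fin n)) B]
        refine Module.End.HasEigenvalue.mem_spectrum ?_
        refine Module.End.hasEigenvalue_of_hasGenEigenvalue (k := k) ?_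
        rw [Module.End.HasGenEigenvalue, Module.End.HasUnifEigenvalue, Submodule.ne_bot_iff]
        exact ⟨w, Module.End.mem_genEigenspace_nat.mpr hk, hw0⟩
      have hμ : μ.re < 0 := hB μ hμmem
      have hmk : ((B - μ • 1) ^ k) *ᵥ w = 0 := by
        have h1 : Matrix.toLinAlgEquiv' B - μ • 1
            = Matrix.toLinAlgEquiv' (B - μ • 1) := by simp [map_sub]
        have : ((Matrix.toLinAlgEquiv' B - μ • 1) ^ k) w = 0 := hk
        rw [h1, ← map_pow] at this
        exact this
      show Tendsto (fun l : ℕ => exp ((l : ℂ) • B) *ᵥ w) atTop (𝓝 0)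
      have heq : ∀ l : ℕ, exp ((l : ℂ) • B) *ᵥ w
          = ∑ j ∈ Finset.range k, (Complex.exp ((l : ℂ) * μ) * ((l : ℂ) ^ j / j.factorial))
              • ((B - μ • 1) ^ j *ᵥ w) := by
        intro l
        rw [exp_smul_mulVec_of_genEig B μ w k hmk ((l : ℂ)), Finset.smul_sum]
        exact Finset.sum_congr rfl fun j _ => by rw [smul_smul]
      rw [show (0 : Fin n → ℂ) = ∑ j ∈ Finset.range k,
          ((0 : ℂ) • ((B - μ • 1) ^ j *ᵥ w)) by simp]
      exact (tendsto_finset_sum _ fun j _ =>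
        Filter.Tendsto.smul_const (coeff_tendsto_zero hμ j) _).congr fun l => (heq l).symm
  have : v ∈ S := by rw [hS]; trivial
  exact this
lemma exp_nat_smul_tendsto_zero {n : ℕ} (A : Matrix (Fin n) (Fin n) ℝ)
    (hA : ∀ μ ∈ spectrum ℂ (A.map (algebraMap ℝ ℂ)), μ.re < 0) :
    Tendsto (fun k : ℕ => exp ((k : ℝ) • A)) atTop (𝓝 0) := by
  set B := A.map (algebraMap ℝ ℂ) with hB
  have hcont : Continuous fun M : Matrix (Fin n) (Fin n) ℝ => M.map (algebraMap ℝ ℂ) :=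
    continuous_id.matrix_map (continuous_algebraMap ℝ ℂ)
  have hmap : ∀ k : ℕ, (exp ((k : ℝ) • A)).map (algebraMap ℝ ℂ)
      = exp ((k : ℂ) • B) := by
    intro k
    have h1 : ((algebraMap ℝ ℂ).mapMatrix : Matrix (Fin n) (Fin n) ℝ →+* _) (exp ((k : ℝ) • A))
        = exp (((algebraMap ℝ ℂ).mapMatrix : Matrix (Fin n) (Fin n) ℝ →+* _) ((k : ℝ) • A)) :=
      map_exp _ hcont _
    have h2 : ((algebraMap ℝ ℂ).mapMatrix : Matrix (Fin n) (Fin n) ℝ →+* _) ((k : ℝ) • A)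
        = (k : ℂ) • B := by
      ext i j
      simp [Matrix.map_apply, RingHom.mapMatrix_apply, hB]
    rw [RingHom.mapMatrix_apply] at h1
    rw [h1, h2]
  refine tendsto_pi_nhds.2 fun i => ?_
  refine tendsto_pi_nhds.2 fun j => ?_
  have hc : Tendsto (fun k : ℕ => exp ((k : ℂ) • B) i j) atTop (𝓝 0) := by
    have := mulVec_exp_tendsto_zero B hA (Pi.single j 1)
    have h3 := (tendsto_pi_nhds.1 this) i
    simpa [Matrix.mulVec_single] using h3
  have hre := (Complex.continuous_re.tendsto 0).comp hc
  refine hre.congr fun k => ?_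
  have := congrFun (congrFun (hmap k) i) j
  simp only [Matrix.map_apply] at this
  simp [Function.comp_apply, ← this]

lemma hasDerivAt_quadExp {n : ℕ} (A Q : Matrix (Fin n) (Fin n) ℝ) (t : ℝ) :
    HasDerivAt (fun u : ℝ => (exp (u • A))ᵀ * Q * exp (u • A))
      ((exp (t • A))ᵀ * (Aᵀ * Q + Q * A) * exp (t • A)) t := by
  have hE : HasDerivAt (fun u : ℝ => exp (u • A)) (A * exp (t • A)) t :=
    hasDerivAt_exp_smul_const' A t
  let Tl : Matrix (Fin n) (Fin n) ℝ →ₗ[ℝ] Matrix (Fin n) (Fin n) ℝ :=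
    { toFun := fun M => Mᵀ
      map_add' := fun M N => Matrix.transpose_add M N
      map_smul' := fun c M => Matrix.transpose_smul c M }
  have hT : HasDerivAt (fun u : ℝ => (exp (u • A))ᵀ) ((A * exp (t • A))ᵀ) t :=
    (Tl.toContinuousLinearMap.hasFDerivAt).comp_hasDerivAt t hE
  have hQE : HasDerivAt (fun u : ℝ => Q * exp (u • A)) (Q * (A * exp (t • A))) t :=
    hE.const_mul Q
  have hmul := hT.mul hQE
  have hfun : (fun u : ℝ => (exp (u • A))ᵀ * Q * exp (u • A))
      = fun u : ℝ => (exp (u • A))ᵀ * (Q * exp (u • A)) := by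
    funext u; rw [mul_assoc]
  rw [hfun]
  refine hmul.congr_deriv ?_
  rw [Matrix.transpose_mul]
  noncomm_ring

theorem lyapunov_unique_solution {n : ℕ} (A : Matrix (Fin n) (Fin n) ℝ)
    (hA : ∀ μ ∈ spectrum ℂ (A.map (algebraMap ℝ ℂ)), μ.re < 0)
    (W : Matrix (Fin n) (Fin n) ℝ) :
    (∃! Q : Matrix (Fin n) (Fin n) ℝ, Aᵀ * Q + Q * A + W = 0) ∧
    (W.PosSemidef → ∀ Q : Matrix (Fin n) (Fin n) ℝ,
      Aᵀ * Q + Q * A + W = 0 → Q.PosSemidef) := by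
  have hdecay := exp_nat_smul_tendsto_zero A hA
  have hcontQ : ∀ Q : Matrix (Fin n) (Fin n) ℝ,
      Tendsto (fun k : ℕ => (exp ((k : ℝ) • A))ᵀ * Q * exp ((k : ℝ) • A)) atTop (𝓝 0) := by
    intro Q
    have hc : Continuous fun M : Matrix (Fin n) (Fin n) ℝ => Mᵀ * Q * M :=
      (continuous_id.matrix_transpose.matrix_mul continuous_const).matrix_mul continuous_id
    have h := (hc.tendsto 0).comp hdecay
    simpa [Function.comp_def] using h
  have hker : ∀ Q : Matrix (Fin n) (Fin n) ℝ, Aᵀ * Q + Q * A = 0 → Q = 0 := by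
    intro Q hQ
    have hg : ∀ s : ℝ, HasDerivAt
        (fun u : ℝ => (exp (u • A))ᵀ * Q * exp (u • A)) 0 s := by
      intro s
      have h := hasDerivAt_quadExp A Q s
      rwa [hQ, Matrix.mul_zero, Matrix.zero_mul] at h
    have hconst : ∀ t : ℝ, (exp (t • A))ᵀ * Q * exp (t • A) = Q := by
      intro t
      have h := is_const_of_deriv_eq_zero (f := fun u : ℝ =>
          (exp (u • A))ᵀ * Q * exp (u • A))
        (fun s => (hg s).differentiableAt) (fun s => (hg s).deriv) t 0
      simpa [exp_zero] using h
    have h2 : Tendsto (fun _ : ℕ => Q) atTop (𝓝 (0 : Matrix (Fin n) (Fin n) ℝ)) :=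
      (hcontQ Q).congr fun k => hconst ((k : ℝ))
    exact tendsto_nhds_unique tendsto_const_nhds h2
  let L : Matrix (Fin n) (Fin n) ℝ →ₗ[ℝ] Matrix (Fin n) (Fin n) ℝ :=
    { toFun := fun Q => Aᵀ * Q + Q * A
      map_add' := fun P R => by noncomm_ring
      map_smul' := fun c P => by
        simp [Matrix.mul_smul, Matrix.smul_mul, smul_add] }
  have hLapp : ∀ Q, L Q = Aᵀ * Q + Q * A := fun _ => rfl
  have hLinj : Function.Injective L := by
    rw [← LinearMap.ker_eq_bot, LinearMap.ker_eq_bot']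
    intro Q hQ
    exact hker Q hQ
  have hLsurj : Function.Surjective L := LinearMap.injective_iff_surjective.mp hLinj
  obtain ⟨Q₀, hQ₀⟩ := hLsurj (-W)
  have hexun : ∃! Q : Matrix (Fin n) (Fin n) ℝ, Aᵀ * Q + Q * A + W = 0 := by
    have h2 : Aᵀ * Q₀ + Q₀ * A = -W := by rw [← hLapp, hQ₀]
    refine ⟨Q₀, by show Aᵀ * Q₀ + Q₀ * A + W = 0; rw [h2]; abel, fun Q' hQ' => ?_⟩
    refine hLinj ?_
    have h1 : Aᵀ * Q' + Q' * A = -W := add_eq_zero_iff_eq_neg.mp hQ'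
    rw [hLapp, h1, hQ₀]
  refine ⟨hexun, fun hW Q hQ => ?_⟩
  have hLQ : Aᵀ * Q + Q * A = -W := by
    have := hQ; rw [add_eq_zero_iff_eq_neg] at this; exact this
  -- symmetry
  have hWt : Wᵀ = W := by
    have := hW.1; simpa [Matrix.IsHermitian] using this
  have hQt : Qᵀ = Q := by
    have hQ' : Aᵀ * Qᵀ + Qᵀ * A + W = 0 := by
      have h := congrArg Matrix.transpose hQ
      simpa [Matrix.transpose_add, Matrix.transpose_mul, hWt, add_comm,
        add_left_comm] using h
    exact (hexun.unique hQ' hQ)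
  have hQherm : Q.IsHermitian := by
    simpa [Matrix.IsHermitian] using hQt
  refine .of_dotProduct_mulVec_nonneg hQherm fun x => ?_
  -- quadratic form
  let l : Matrix (Fin n) (Fin n) ℝ →ₗ[ℝ] ℝ :=
    { toFun := fun M => x ⬝ᵥ (M *ᵥ x)
      map_add' := fun M N => by simp [Matrix.add_mulVec, dotProduct_add]
      map_smul' := fun c M => by simp [Matrix.smul_mulVec, dotProduct_smul] }
  set f : ℝ → ℝ := fun t => l ((exp (t • A))ᵀ * Q * exp (t • A)) with hf
  have hfder : ∀ t : ℝ, HasDerivAt f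
      (l ((exp (t • A))ᵀ * (-W) * exp (t • A))) t := by
    intro t
    have h := (l.toContinuousLinearMap.hasFDerivAt).comp_hasDerivAt t
      (hasDerivAt_quadExp A Q t)
    rw [hLQ] at h
    exact h
  have hfder_nonpos : ∀ t : ℝ, deriv f t ≤ 0 := by
    intro t
    rw [(hfder t).deriv]
    have hquad : l ((exp (t • A))ᵀ * (-W) * exp (t • A))
        = -((exp (t • A) *ᵥ x) ⬝ᵥ (W *ᵥ (exp (t • A) *ᵥ x))) := by
      show x ⬝ᵥ (((exp (t • A))ᵀ * (-W) * exp (t • A)) *ᵥ x) = _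
      rw [mul_assoc, ← Matrix.mulVec_mulVec, ← Matrix.mulVec_mulVec,
        Matrix.dotProduct_mulVec x, Matrix.vecMul_transpose, Matrix.neg_mulVec,
        dotProduct_neg]
    rw [hquad, neg_nonpos]
    have := hW.dotProduct_mulVec_nonneg (exp (t • A) *ᵥ x)
    simpa using this
  have hfanti : Antitone f :=
    antitone_of_deriv_nonpos (fun t => (hfder t).differentiableAt) hfder_nonpos
  have hflim : Tendsto (fun k : ℕ => f ((k : ℝ))) atTop (𝓝 0) := by
    have hl : Continuous l := l.continuous_of_finiteDimensional
    have h := (hl.tendsto 0).comp (hcontQ Q)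
    simpa [hf, Function.comp_def] using h
  have hge : (0 : ℝ) ≤ f 0 :=
    le_of_tendsto hflim (Filter.Eventually.of_forall fun k => hfanti (Nat.cast_nonneg k))
  have hf0 : f 0 = x ⬝ᵥ (Q *ᵥ x) := by
    show x ⬝ᵥ (((exp ((0:ℝ) • A))ᵀ * Q * exp ((0:ℝ) • A)) *ᵥ x) = _
    simp [exp_zero]
  simpa [hf0] using hge
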